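/- Let b > 0 and R : ℝ → ℝ be 2π-periodic and continuously differentiable with R(θ) = √(b² + 2r(θ)) where ‖r‖_{C¹} ≤ ε₀ and ε₀ > 0 is sufficiently small (depending only on b). Then for all θ, η ∈ ℝ: b|sin((θ-η)/2)| ≤ |R(θ)e^{iθ} - R(η)e^{iη}| ≤ 3b|sin((θ-η)/2)|. -/

import Mathlib

open Real

theorem aux_abs_sq (a c θ η : ℝ) :
    ‖((a:ℂ) * Complex.exp (Complex.I*θ) - (c:ℂ) * Complex.exp (Complex.I*η))‖^2
      = (a-c)^2 + 4*a*c*(Real.sin ((θ-η)/2))^2 := by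
  have h1 : Complex.I * (θ:ℂ) = (θ:ℂ) * Complex.I := mul_comm _ _
  have h2 : Complex.I * (η:ℂ) = (η:ℂ) * Complex.I := mul_comm _ _
  rw [h1, h2, Complex.sq_norm, Complex.exp_mul_I, Complex.exp_mul_I]
  simp [Complex.normSq_apply, Complex.cos_ofReal_re, Complex.sin_ofReal_re]
  have hc := Real.cos_sub θ η
  have hs : Real.cos (θ-η) = 1 - 2 * Real.sin ((θ-η)/2)^2 := by
    rw [show θ-η = 2*((θ-η)/2) by ring, Real.cos_two_mul, Real.cos_sq']; ring
  have p1 := Real.sin_sq_add_cos_sq θ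
  have p2 := Real.sin_sq_add_cos_sq η
  nlinarith [hc, hs, p1, p2, sq_nonneg a, sq_nonneg c]

theorem aux_lin (x : ℝ) (h0 : 0 ≤ x) (h1 : x ≤ π) : x ≤ π * Real.sin (x/2) := by
  have hπ := Real.pi_pos
  have := Real.mul_le_sin (x := x/2) (by linarith) (by linarith)
  calc x = π * (2/π * (x/2)) := by field_simp
  _ ≤ π * Real.sin (x/2) := by
      apply mul_le_mul_of_nonneg_left this hπ.le

set_option maxHeartbeats 1000000 in
/-- For `ε₀` small enough (depending only on `b`), any `2π`-periodic `C¹` perturbation `r`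
with `‖r‖_{C¹} ≤ ε₀` and `R(θ) = √(b² + 2r(θ))` satisfies
`b|sin((θ-η)/2)| ≤ |R(θ)e^{iθ} - R(η)e^{iη}| ≤ 3b|sin((θ-η)/2)|`. -/
theorem stmt_19 (b : ℝ) (hb : 0 < b) :
    ∃ ε₀ > (0:ℝ), ∀ r : ℝ → ℝ, ContDiff ℝ 1 r →
      (∀ θ, r (θ + 2*π) = r θ) →
      (∀ θ, |r θ| ≤ ε₀) → (∀ θ, |deriv r θ| ≤ ε₀) →
      ∀ θ η : ℝ,
        b * |Real.sin ((θ - η)/2)| ≤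
          ‖((Real.sqrt (b^2 + 2 * r θ) : ℂ) * Complex.exp (Complex.I * θ)
            - (Real.sqrt (b^2 + 2 * r η) : ℂ) * Complex.exp (Complex.I * η))‖ ∧
        ‖((Real.sqrt (b^2 + 2 * r θ) : ℂ) * Complex.exp (Complex.I * θ)
            - (Real.sqrt (b^2 + 2 * r η) : ℂ) * Complex.exp (Complex.I * η))‖
          ≤ 3 * b * |Real.sin ((θ - η)/2)| := by
  refine ⟨b^2/4, by positivity, ?_⟩
  intro r hr hper hr0 hr1 θ η
  have hπ := Real.pi_pos
  have hπ2 : (π:ℝ)^2 ≤ 10 := by nlinarith [Real.pi_lt_d2]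
  have hbθl : b^2/2 ≤ b^2 + 2*r θ := by linarith [(abs_le.1 (hr0 θ)).1]
  have hbηl : b^2/2 ≤ b^2 + 2*r η := by linarith [(abs_le.1 (hr0 η)).1]
  have hbθu : b^2 + 2*r θ ≤ 3*b^2/2 := by linarith [(abs_le.1 (hr0 θ)).2]
  have hbηu : b^2 + 2*r η ≤ 3*b^2/2 := by linarith [(abs_le.1 (hr0 η)).2]
  have hb2 : (0:ℝ) < b^2 := by positivity
  set a := Real.sqrt (b^2 + 2*r θ) with hadef
  set c := Real.sqrt (b^2 + 2*r η) with hcdef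
  have ha0 : 0 ≤ a := Real.sqrt_nonneg _
  have hc0 : 0 ≤ c := Real.sqrt_nonneg _
  have ha2 : a^2 = b^2 + 2*r θ := Real.sq_sqrt (by linarith)
  have hc2 : c^2 = b^2 + 2*r η := Real.sq_sqrt (by linarith)
  set s := |Real.sin ((θ - η)/2)| with hsdef
  have hs0 : 0 ≤ s := abs_nonneg _
  have habs := aux_abs_sq a c θ η
  rw [show Real.sin ((θ-η)/2)^2 = s^2 from (sq_abs _).symm] at habs
  set X := ‖((a:ℂ) * Complex.exp (Complex.I*θ) - (c:ℂ) * Complex.exp (Complex.I*η))‖ with hXdef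
  have hX0 : 0 ≤ X := norm_nonneg _
  -- lower bounds on a, c
  have haL : b/2 ≤ a := by
    have h1 : Real.sqrt ((b/2)^2) ≤ Real.sqrt (b^2 + 2*r θ) := Real.sqrt_le_sqrt (by nlinarith)
    rwa [Real.sqrt_sq (by positivity)] at h1
  have hcL : b/2 ≤ c := by
    have h1 : Real.sqrt ((b/2)^2) ≤ Real.sqrt (b^2 + 2*r η) := Real.sqrt_le_sqrt (by nlinarith)
    rwa [Real.sqrt_sq (by positivity)] at h1
  have hac : (b/2)*(b/2) ≤ a*c := mul_le_mul haL hcL (by positivity) ha0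
  have hacu : a*c ≤ 3*b^2/2 := by nlinarith [sq_nonneg (a-c)]
  have hsum : b ≤ a + c := by linarith
  -- Lipschitz
  have hlip : ∀ x y : ℝ, |r x - r y| ≤ b^2/4 * |x - y| := by
    intro x y
    have := Convex.norm_image_sub_le_of_norm_deriv_le (f := r) (s := Set.univ)
      (fun z _ => (hr.differentiable one_ne_zero).differentiableAt)
      (fun z _ => by simpa using hr1 z) convex_univ (Set.mem_univ y) (Set.mem_univ x)
    simpa [Real.norm_eq_abs] using this
  -- reduce mod 2π
  obtain ⟨k, δ, hδdef, hδ⟩ : ∃ (k:ℤ) (δ:ℝ), θ - η = δ + k*(2*π) ∧ |δ| ≤ π := by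
    refine ⟨round ((θ-η)/(2*π)), θ - η - round ((θ-η)/(2*π)) * (2*π), by ring, ?_⟩
    have h := abs_sub_round ((θ-η)/(2*π))
    have h2π : (0:ℝ) < 2*π := by linarith
    have : θ - η - (round ((θ-η)/(2*π)) : ℝ) * (2*π)
        = ((θ-η)/(2*π) - round ((θ-η)/(2*π))) * (2*π) := by field_simp
    rw [this, abs_mul, abs_of_pos h2π]
    calc |(θ-η)/(2*π) - (round ((θ-η)/(2*π)):ℝ)| * (2*π) ≤ (1/2) * (2*π) := by
          apply mul_le_mul_of_nonneg_right h h2π.le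
      _ = π := by ring
  have hperiodic : Function.Periodic r (2*π) := hper
  have hrθ : r θ = r (η + δ) := by
    rw [show θ = (η + δ) + (k:ℝ)*(2*π) by linarith]
    exact (hperiodic.int_mul k) (η + δ)
  -- s in terms of δ
  have hssin : s = |Real.sin (δ/2)| := by
    rw [hsdef, show (θ-η)/2 = δ/2 + (k:ℝ)*π by rw [hδdef]; ring,
      Real.sin_add_int_mul_pi, abs_mul]
    rcases Int.even_or_odd k with he | ho
    · rw [he.neg_one_zpow]; simp
    · rw [Odd.neg_one_zpow ho]; simp
  -- |δ| ≤ π * s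
  have hδs : |δ| ≤ π * s := by
    rw [hssin]
    rcases abs_cases δ with ⟨h1, h2⟩ | ⟨h1, h2⟩
    · rw [h1]
      calc δ ≤ π * Real.sin (δ/2) := aux_lin δ h2 (h1 ▸ hδ)
        _ ≤ π * |Real.sin (δ/2)| := by
            apply mul_le_mul_of_nonneg_left (le_abs_self _) hπ.le
    · rw [h1]
      have := aux_lin (-δ) (by linarith) (h1 ▸ hδ)
      calc -δ ≤ π * Real.sin (-δ/2) := by
            rw [show -δ/2 = (-δ)/2 by ring]; exact this
        _ = π * -Real.sin (δ/2) := by rw [show -δ/2 = -(δ/2) by ring, Real.sin_neg]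
        _ ≤ π * |Real.sin (δ/2)| := by
            apply mul_le_mul_of_nonneg_left (neg_le_abs _) hπ.le
  -- difference bound
  have hrr : |r θ - r η| ≤ b^2/4 * (π * s) := by
    rw [hrθ]
    calc |r (η+δ) - r η| ≤ b^2/4 * |η + δ - η| := hlip _ _
      _ = b^2/4 * |δ| := by ring_nf
      _ ≤ b^2/4 * (π * s) := by apply mul_le_mul_of_nonneg_left hδs (by positivity)
  have hdiff : a^2 - c^2 = 2*(r θ - r η) := by rw [ha2, hc2]; ring
  have h2 : (r θ - r η)^2 ≤ (b^2/4 * (π*s))^2 := by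
    calc (r θ - r η)^2 = |r θ - r η|^2 := (sq_abs _).symm
      _ ≤ (b^2/4 * (π*s))^2 := pow_le_pow_left₀ (abs_nonneg _) hrr 2
  have h3 : (a-c)^2 * b^2 ≤ (a-c)^2 * (a+c)^2 :=
    mul_le_mul_of_nonneg_left (by nlinarith) (sq_nonneg _)
  have h4 : (a-c)^2 * (a+c)^2 = 4*(r θ - r η)^2 := by
    calc (a-c)^2 * (a+c)^2 = (a^2 - c^2)^2 := by ring
      _ = 4*(r θ - r η)^2 := by rw [hdiff]; ring
  have h5 : (a-c)^2 ≤ 5/2 * b^2 * s^2 := by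
    have key : (a-c)^2 * b^2 ≤ 5/2 * b^2 * s^2 * b^2 := by
      nlinarith [mul_nonneg (mul_nonneg hb2.le hb2.le) (sq_nonneg s)]
    nlinarith [key, hb2]
  constructor
  · apply le_of_pow_le_pow_left₀ two_ne_zero hX0
    rw [habs]
    nlinarith [mul_le_mul_of_nonneg_right hac (sq_nonneg s), sq_nonneg (a-c)]
  · have hfin : X^2 ≤ (3*b*s)^2 := by
      rw [habs]
      nlinarith [mul_le_mul_of_nonneg_right hacu (sq_nonneg s), h5]
    exact le_of_pow_le_pow_left₀ two_ne_zero (by positivity) hfin
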